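/- arXiv:0810.5185 — 2 statements merged into one kernel-verified Lean document; each statement's English description precedes it below -/
import Mathlib

section
/- Let Λ be a ring (or finite-dimensional algebra), C a full subcategory of mod Λ closed under extensions, and suppose f : C_M → M is a minimal right C-approximation of a module M with kernel K. Then Ext¹(L, K) = 0 for every L in C (Wakamatsu's Lemma). -/
open CategoryTheory
universe u

/-- A short exact sequence `0 → X → E → Y → 0` of `R`-modules. -/
structure ModSES (R : Type u) [Ring R] (X E Y : ModuleCat.{u} R) where
  i : X ⟶ E
  p : E ⟶ Y
  inj : Function.Injective i
  surj : Function.Surjective p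
  exact : Function.Exact i p

/-- A short exact sequence splits. -/
def ModSES.Splits {R : Type u} [Ring R] {X E Y : ModuleCat.{u} R}
    (s : ModSES R X E Y) : Prop :=
  ∃ r : E ⟶ X, s.i ≫ r = 𝟙 X

/-- `Ext¹(Y, X) = 0`: every extension of `Y` by `X` splits. -/
def Ext1Zero (R : Type u) [Ring R] (Y X : ModuleCat.{u} R) : Prop :=
  ∀ (E : ModuleCat.{u} R) (s : ModSES R X E Y), s.Splits

/-- `N` belongs to `add M`: it is a direct summand of a finite direct sum of copies of `M`. -/
def InAdd (R : Type u) [Ring R] (M N : ModuleCat.{u} R) : Prop :=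
  ∃ (n : ℕ) (s : N ⟶ ModuleCat.of R (Fin n → M)) (r : ModuleCat.of R (Fin n → M) ⟶ N),
    s ≫ r = 𝟙 N

/-- `f : C_M ⟶ X` is a right `𝒞`-approximation. -/
def IsRightApprox (R : Type u) [Ring R] (𝒞 : ModuleCat.{u} R → Prop)
    {CM X : ModuleCat.{u} R} (f : CM ⟶ X) : Prop :=
  𝒞 CM ∧ ∀ C : ModuleCat.{u} R, 𝒞 C → ∀ g : C ⟶ X, ∃ h : C ⟶ CM, h ≫ f = g

/-- A morphism is right minimal. -/
def RightMinimal {R : Type u} [Ring R] {E X : ModuleCat.{u} R} (f : E ⟶ X) : Prop :=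
  ∀ g : E ⟶ E, g ≫ f = f → Function.Bijective g

/-- Projective dimension at most `n`, via projective resolutions. -/
def pdLE (R : Type u) [Ring R] : ℕ → ModuleCat.{u} R → Prop
  | 0, N => Projective N
  | (n+1), N => ∃ (P K : ModuleCat.{u} R) (ι : K ⟶ P) (π : P ⟶ N),
      Projective P ∧ Function.Injective ι ∧ Function.Surjective π ∧ Function.Exact ι π ∧
        pdLE R n K

/-- Global dimension at most `n` (tested on finitely generated modules). -/
def gldimLE (R : Type u) [Ring R] (n : ℕ) : Prop :=
  ∀ N : ModuleCat.{u} R, Module.Finite R N → pdLE R n N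

/-- The global dimension, as an element of `ℕ∞`. -/
noncomputable def gldim (R : Type u) [Ring R] : ℕ∞ :=
  sInf {d : ℕ∞ | ∃ n : ℕ, d = n ∧ gldimLE R n}

/-- An indecomposable module: nonzero, and `0, id` are the only idempotent endomorphisms. -/
def Indec {R : Type u} [Ring R] (M : ModuleCat.{u} R) : Prop :=
  Nontrivial M ∧ ∀ f : M ⟶ M, f ≫ f = f → f = 0 ∨ f = 𝟙 M

/-- `M` is a generator-cogenerator of `mod R`. -/
def IsGenCogen (R : Type u) [Ring R] (M : ModuleCat.{u} R) : Prop :=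
  InAdd R M (ModuleCat.of R R) ∧
    ∀ I : ModuleCat.{u} R, Module.Finite R I → Injective I → InAdd R M I

/-- The representation dimension is at most `n`. -/
def repdimLE (R : Type u) [Ring R] (n : ℕ) : Prop :=
  ∃ M : ModuleCat.{u} R, Module.Finite R M ∧ IsGenCogen R M ∧
    gldimLE (Module.End R M) n

/-- **Wakamatsu's Lemma.** If `𝒞` is a full subcategory of `mod Λ` closed under extensions and
`f : C_M ⟶ M` is a minimal right `𝒞`-approximation with kernel `K`, then `Ext¹(L, K) = 0`
for every `L ∈ 𝒞`. -/
theorem wakamatsu_lemma (R : Type u) [Ring R] (𝒞 : ModuleCat.{u} R → Prop)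
    (hext : ∀ (X E Y : ModuleCat.{u} R), 𝒞 X → 𝒞 Y → ModSES R X E Y → 𝒞 E)
    {CM M K : ModuleCat.{u} R} (f : CM ⟶ M)
    (happrox : IsRightApprox R 𝒞 f) (hmin : RightMinimal f)
    (κ : K ⟶ CM) (hκinj : Function.Injective κ) (hker : Function.Exact κ f)
    (L : ModuleCat.{u} R) (hL : 𝒞 L) : Ext1Zero R L K := by
  intro E s
  classical
  -- Pushout of κ : K ⟶ CM along s.i : K ⟶ E
  let δ : K →ₗ[R] (CM × E) := LinearMap.prod κ.hom (-s.i.hom)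
  let N : Submodule R (CM × E) := LinearMap.range δ
  let P : ModuleCat.{u} R := ModuleCat.of R ((CM × E) ⧸ N)
  let u : CM ⟶ P := ModuleCat.ofHom (N.mkQ.comp (LinearMap.inl R CM E))
  let w : E ⟶ P := ModuleCat.ofHom (N.mkQ.comp (LinearMap.inr R CM E))
  have hvker : N ≤ LinearMap.ker (s.p.hom.comp (LinearMap.snd R CM E)) := by
    rintro x ⟨k, rfl⟩
    have hnk : (-s.i.hom) k = -(s.i k) := rfl
    simp [δ, hnk, map_neg, (s.exact (s.i k)).mpr ⟨k, rfl⟩]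
  let v : P ⟶ L := ModuleCat.ofHom (N.liftQ _ hvker)
  have hgker : N ≤ LinearMap.ker (f.hom.comp (LinearMap.fst R CM E)) := by
    rintro x ⟨k, rfl⟩
    simp [δ, (hker (κ k)).mpr ⟨k, rfl⟩]
  let g : P ⟶ M := ModuleCat.ofHom (N.liftQ _ hgker)
  -- u is injective
  have huinj : Function.Injective u := by
    rw [show ConcreteCategory.hom u = N.mkQ.comp (LinearMap.inl R CM E) from rfl,
      ← LinearMap.ker_eq_bot, eq_bot_iff]
    intro a ha
    have hmem : ((a, 0) : CM × E) ∈ N := by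
      have := (Submodule.Quotient.mk_eq_zero N).mp ha
      simpa using this
    obtain ⟨k, hk⟩ := hmem
    have hk1 : κ k = a := congrArg Prod.fst hk
    have hk2 : -(s.i k) = 0 := congrArg Prod.snd hk
    have hk0 : k = 0 := s.inj (by simpa [neg_eq_zero] using hk2)
    simp [hk0] at hk1
    simpa using hk1.symm
  -- v is surjective
  have hvsurj : Function.Surjective v := by
    intro l
    obtain ⟨e, he⟩ := s.surj l
    exact ⟨N.mkQ (0, e), he⟩
  -- exactness of u, v
  have hexuv : Function.Exact u v := by
    intro y
    obtain ⟨⟨c, e⟩, rfl⟩ := Submodule.Quotient.mk_surjective N y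
    constructor
    · intro hy
      have hpe : s.p e = 0 := hy
      obtain ⟨k, hk⟩ := (s.exact e).mp hpe
      refine ⟨c + κ k, ?_⟩
      have hmem : ((c + κ k, 0) : CM × E) - (c, e) ∈ N :=
        ⟨k, by
          have hnk : (-s.i.hom) k = -(s.i k) := rfl
          simp [δ, hnk, hk, Prod.ext_iff]⟩
      exact (Submodule.Quotient.eq N).mpr hmem
    · rintro ⟨c', hc'⟩
      rw [← hc']
      show v (u c') = 0
      exact map_zero s.p.hom
  have hP𝒞 : 𝒞 P := hext CM P L happrox.1 hL ⟨u, v, huinj, hvsurj, hexuv⟩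
  -- basic computations
  have hug : ∀ c, g (u c) = f c := fun c => rfl
  have hwg : ∀ e, g (w e) = 0 := fun e => map_zero f.hom
  obtain ⟨h, hh⟩ := happrox.2 P hP𝒞 g
  have hhpt : ∀ x : P, f (h x) = g x := fun x => congrArg (fun φ => φ.hom x) hh
  -- t = u ≫ h is an automorphism of CM
  let t : CM ⟶ CM := u ≫ h
  have htf : t ≫ f = f := by
    apply ModuleCat.hom_ext
    apply LinearMap.ext
    intro c
    show f (h (u c)) = f c
    rw [hhpt, hug]
  have htbij : Function.Bijective t := hmin t htf
  have htfpt : ∀ c, f (t c) = f c := fun c => congrArg (fun φ => φ.hom c) htf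
  let teq : CM ≃ₗ[R] CM := LinearEquiv.ofBijective t.hom htbij
  let q : P ⟶ CM := ModuleCat.ofHom ((teq.symm.toLinearMap).comp h.hom)
  have huq : ∀ c, q (u c) = c := by
    intro c
    show teq.symm (h (u c)) = c
    have : h (u c) = teq c := rfl
    rw [this, teq.symm_apply_apply]
  have hfq : ∀ x : P, f (q x) = g x := by
    intro x
    show f (teq.symm (h x)) = g x
    have : f (teq.symm (h x)) = f (t (teq.symm (h x))) := (htfpt _).symm
    rw [this, show t (teq.symm (h x)) = teq (teq.symm (h x)) from rfl,
      teq.apply_symm_apply, hhpt]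
  -- ψ = w ≫ q lands in the image of κ
  let ψ : E →ₗ[R] CM := q.hom.comp w.hom
  have hψmem : ∀ e, ψ e ∈ LinearMap.range κ.hom := by
    intro e
    have hf0 : f (ψ e) = 0 := by
      show f (q (w e)) = 0
      rw [hfq, hwg]
    obtain ⟨k, hk⟩ := (hker (ψ e)).mp hf0
    exact ⟨k, hk⟩
  let κeq : K ≃ₗ[R] LinearMap.range κ.hom :=
    LinearEquiv.ofInjective κ.hom hκinj
  let r : E ⟶ K := ModuleCat.ofHom ((κeq.symm.toLinearMap).comp
    (LinearMap.codRestrict (LinearMap.range κ.hom) ψ hψmem))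
  have hκeq : ∀ y : LinearMap.range κ.hom, κ (κeq.symm y) = (y : CM) := by
    intro y
    calc κ (κeq.symm y)
        = ((κeq (κeq.symm y) : LinearMap.range κ.hom) : CM) :=
          (LinearEquiv.ofInjective_apply κ.hom (κeq.symm y)).symm
      _ = (y : CM) := congrArg _ (κeq.apply_symm_apply y)
  have hrκ : ∀ e, κ (r e) = ψ e := fun e => hκeq _
  refine ⟨r, ?_⟩
  apply ModuleCat.hom_ext
  apply LinearMap.ext
  intro k
  apply hκinj
  show κ (r (s.i k)) = κ k
  rw [hrκ]
  show q (w (s.i k)) = κ k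
  have hwu : w (s.i k) = u (κ k) := by
    have : ((κ k, 0) : CM × E) - (0, s.i k) ∈ N := ⟨k, by
      have hnk : (-s.i.hom) k = -(s.i k) := rfl
      simp [δ, hnk, Prod.ext_iff]⟩
    have := (Submodule.Quotient.eq N).mpr this
    exact this.symm
  rw [hwu, huq]
end

section
/- Let A be hereditary, A^(m) its m-replicated algebra, and M an A^(m)-module containing all projective-injective indecomposable A^(m)-modules as direct summands. If an A^(m)-module X has a projective-injective projective cover, then every minimal right add-M-approximation of X is an epimorphism. -/
open CategoryTheory
universe u

/-- `f` factors through a projective module. -/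
def FactorsThroughProj (R : Type u) [Ring R] {X Y : ModuleCat.{u} R} (f : X ⟶ Y) : Prop :=
  ∃ (P : ModuleCat.{u} R) (g : X ⟶ P) (h : P ⟶ Y), Projective P ∧ g ≫ h = f

/-- `f` factors through a projective-injective module. -/
def FactorsThroughProjInj (R : Type u) [Ring R] {X Y : ModuleCat.{u} R} (f : X ⟶ Y) : Prop :=
  ∃ (P : ModuleCat.{u} R) (g : X ⟶ P) (h : P ⟶ Y), Projective P ∧ Injective P ∧ g ≫ h = f

/-- `ι : X ⟶ I` is an injective envelope: `I` is injective and `ι` is an essential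
monomorphism. -/
def IsInjEnvelope (R : Type u) [Ring R] {X I : ModuleCat.{u} R} (ι : X ⟶ I) : Prop :=
  Injective I ∧ Function.Injective ι ∧
    ∀ S : Submodule R I, S ≠ ⊥ → S ⊓ LinearMap.range (ι.hom : X →ₗ[R] I) ≠ ⊥

/-- `Y` is the first cosyzygy `Ω⁻¹X` of `X`: the cokernel of an injective envelope of `X`. -/
def IsCosyzygy (R : Type u) [Ring R] (X Y : ModuleCat.{u} R) : Prop :=
  ∃ (I : ModuleCat.{u} R) (ι : X ⟶ I) (π : I ⟶ Y),
    IsInjEnvelope R ι ∧ Function.Surjective π ∧ Function.Exact ι π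

/-- `Y` is a `k`-th cosyzygy `Ω⁻ᵏX` of `X`. -/
def IsCosyzygyIter (R : Type u) [Ring R] : ℕ → ModuleCat.{u} R → ModuleCat.{u} R → Prop
  | 0, X, Y => Nonempty (X ≅ Y)
  | (n+1), X, Y => ∃ Z : ModuleCat.{u} R, IsCosyzygy R X Z ∧ IsCosyzygyIter R n Z Y

/-- An almost split (Auslander-Reiten) sequence. -/
def IsAlmostSplit (R : Type u) [Ring R] {X E Y : ModuleCat.{u} R} (s : ModSES R X E Y) : Prop :=
  ¬ s.Splits ∧ Indec X ∧ Indec Y ∧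
    ∀ (Z : ModuleCat.{u} R) (f : Z ⟶ Y),
      (¬ ∃ g : Y ⟶ Z, g ≫ f = 𝟙 Y) → ∃ h : Z ⟶ E, h ≫ s.p = f

/-- One nonzero morphism between finitely generated indecomposables. -/
def PathStep (R : Type u) [Ring R] (X Y : ModuleCat.{u} R) : Prop :=
  Indec X ∧ Indec Y ∧ Module.Finite R X ∧ Module.Finite R Y ∧ ∃ f : X ⟶ Y, f ≠ 0

/-- The path (pre)order on `ind R`: a path of nonzero morphisms between indecomposables. -/
def ModPath (R : Type u) [Ring R] : ModuleCat.{u} R → ModuleCat.{u} R → Prop :=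
  Relation.ReflTransGen (PathStep R)

/-- `S₁ ≤ S₂` for sets of indecomposable modules, in the sense of Ringel. -/
def SetLE (R : Type u) [Ring R] (S₁ S₂ : Set (ModuleCat.{u} R)) : Prop :=
  (∀ Y ∈ S₂, ∃ X ∈ S₁, ModPath R X Y) ∧ (∀ X ∈ S₁, ∃ Y ∈ S₂, ModPath R X Y) ∧
    ∀ X ∈ S₁, ∀ Y ∈ S₂, ¬ ModPath R Y X

/-- `S₁ < S₂` : `S₁ ≤ S₂` and moreover no module of `S₂` is isomorphic to one of `S₁`. -/
def SetLT (R : Type u) [Ring R] (S₁ S₂ : Set (ModuleCat.{u} R)) : Prop :=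
  SetLE R S₁ S₂ ∧ ∀ X ∈ S₁, ∀ Y ∈ S₂, ¬ Nonempty (X ≅ Y)

/-- `p : P ⟶ M` is a projective cover. -/
def IsProjCover (R : Type u) [Ring R] {P M : ModuleCat.{u} R} (p : P ⟶ M) : Prop :=
  Projective P ∧ Function.Surjective p ∧
    ∀ (Z : ModuleCat.{u} R) (g : Z ⟶ P), Function.Surjective (g ≫ p) → Function.Surjective g

/-- The dominant dimension of `R` is at least `n`: there is an exact sequence
`0 → R → I₁ → ⋯ → Iₙ` with all `Iⱼ` projective-injective. -/
def domdimGE (R : Type u) [Ring R] (n : ℕ) : Prop :=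
  ∃ (C : ℕ → ModuleCat.{u} R) (d : ∀ i : ℕ, C i ⟶ C (i+1)),
    Nonempty (C 0 ≅ ModuleCat.of R R) ∧
    (∀ i : ℕ, 1 ≤ i → i ≤ n → Injective (C i) ∧ Projective (C i)) ∧
    Function.Injective (d 0) ∧
    ∀ i : ℕ, i + 1 ≤ n → Function.Exact (d i) (d (i+1))

/-- `U` is an additive generator for the class of indecomposables satisfying `pred`:
`add U` consists exactly of sums of indecomposables with that property. -/
def AddGenBy (R : Type u) [Ring R] (U : ModuleCat.{u} R)
    (pred : ModuleCat.{u} R → Prop) : Prop :=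
  (∀ N : ModuleCat.{u} R, Indec N → pred N → InAdd R U N) ∧
    ∀ N : ModuleCat.{u} R, Indec N → InAdd R U N → pred N

variable (k : Type) [Field k] (A : Type) [Ring A] [Algebra k A]

def BiDiag (Dg Sb : Type) (cl rw : Sb → Dg) : Type :=
  (Dg → A) × (Sb → Module.Dual k A)

namespace BiDiag

variable {Dg Sb : Type} {cl rw : Sb → Dg}

instance : AddCommGroup (BiDiag k A Dg Sb cl rw) :=
  inferInstanceAs (AddCommGroup ((Dg → A) × (Sb → Module.Dual k A)))

variable {k A} in
noncomputable instance : Mul (BiDiag k A Dg Sb cl rw) :=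
  ⟨fun x y =>
    (fun d => x.1 d * y.1 d,
     fun s => (x.2 s).comp (LinearMap.mulLeft k (y.1 (cl s))) +
       (y.2 s).comp (LinearMap.mulRight k (x.1 (rw s))))⟩

instance : One (BiDiag k A Dg Sb cl rw) := ⟨(fun _ => 1, 0)⟩

variable {k A}

@[simp] lemma mul_fst (x y : BiDiag k A Dg Sb cl rw) (d : Dg) :
    (x * y).1 d = x.1 d * y.1 d := rfl

@[simp] lemma mul_snd_apply (x y : BiDiag k A Dg Sb cl rw) (s : Sb) (w : A) :
    (x * y).2 s w = x.2 s (y.1 (cl s) * w) + y.2 s (w * x.1 (rw s)) := rfl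

@[simp] lemma one_fst (d : Dg) : (1 : BiDiag k A Dg Sb cl rw).1 d = 1 := rfl
@[simp] lemma one_snd (s : Sb) : (1 : BiDiag k A Dg Sb cl rw).2 s = 0 := rfl
@[simp] lemma add_fst (x y : BiDiag k A Dg Sb cl rw) (d : Dg) :
    (x + y).1 d = x.1 d + y.1 d := rfl
@[simp] lemma add_snd (x y : BiDiag k A Dg Sb cl rw) (s : Sb) :
    (x + y).2 s = x.2 s + y.2 s := rfl
@[simp] lemma zero_fst (d : Dg) : (0 : BiDiag k A Dg Sb cl rw).1 d = 0 := rfl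
@[simp] lemma zero_snd (s : Sb) : (0 : BiDiag k A Dg Sb cl rw).2 s = 0 := rfl

noncomputable instance : Ring (BiDiag k A Dg Sb cl rw) :=
  { (inferInstance : AddCommGroup (BiDiag k A Dg Sb cl rw)),
    (inferInstance : Mul (BiDiag k A Dg Sb cl rw)),
    (inferInstance : One (BiDiag k A Dg Sb cl rw)) with
    mul_assoc := fun x y z =>
      Prod.ext (funext fun d => mul_assoc _ _ _)
        (funext fun s => LinearMap.ext fun w => by simp [mul_assoc]; abel)
    one_mul := fun x =>
      Prod.ext (funext fun d => one_mul _)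
        (funext fun s => LinearMap.ext fun w => by simp)
    mul_one := fun x =>
      Prod.ext (funext fun d => mul_one _)
        (funext fun s => LinearMap.ext fun w => by simp)
    left_distrib := fun x y z =>
      Prod.ext (funext fun d => mul_add _ _ _)
        (funext fun s => LinearMap.ext fun w => by
          simp [mul_add, add_mul, map_add]; abel)
    right_distrib := fun x y z =>
      Prod.ext (funext fun d => add_mul _ _ _)
        (funext fun s => LinearMap.ext fun w => by
          simp [mul_add, add_mul, map_add]; abel)
    zero_mul := fun x =>
      Prod.ext (funext fun d => zero_mul _)
        (funext fun s => LinearMap.ext fun w => by simp)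
    mul_zero := fun x =>
      Prod.ext (funext fun d => mul_zero _)
        (funext fun s => LinearMap.ext fun w => by simp) }

end BiDiag

/-- The right repetitive algebra `A'` of `A` (ℕ × ℕ lower bidiagonal matrices, with diagonal
entries in `A` and subdiagonal entries in `D(A)`). -/
noncomputable def RightRep := BiDiag k A ℕ ℕ id Nat.succ

noncomputable instance : Ring (RightRep k A) := inferInstanceAs (Ring (BiDiag k A ℕ ℕ id Nat.succ))

/-- The repetitive algebra `Â` of `A` (ℤ-indexed). -/
noncomputable def HatRep := BiDiag k A ℤ ℤ id (· + 1)

noncomputable instance : Ring (HatRep k A) := inferInstanceAs (Ring (BiDiag k A ℤ ℤ id (· + 1)))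

/-- The `m`-replicated algebra `A^(m)` of `A`. -/
noncomputable def ReplAlg (m : ℕ) := BiDiag k A (Fin (m+1)) (Fin m) Fin.castSucc Fin.succ

noncomputable instance (m : ℕ) : Ring (ReplAlg k A m) :=
  inferInstanceAs (Ring (BiDiag k A (Fin (m+1)) (Fin m) Fin.castSucc Fin.succ))

/-- Projection of the right repetitive algebra onto the `0`-th copy of `A`. -/
noncomputable def RightRep.proj0 : RightRep k A →+* A where
  toFun x := x.1 0
  map_one' := rfl
  map_mul' _ _ := rfl
  map_zero' := rfl
  map_add' _ _ := rfl

/-- Projection of the repetitive algebra onto the `0`-th copy of `A`. -/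
noncomputable def HatRep.proj0 : HatRep k A →+* A where
  toFun x := x.1 0
  map_one' := rfl
  map_mul' _ _ := rfl
  map_zero' := rfl
  map_add' _ _ := rfl

/-- Projection of the `m`-replicated algebra onto the `0`-th copy of `A`. -/
noncomputable def ReplAlg.proj0 (m : ℕ) : ReplAlg k A m →+* A where
  toFun x := x.1 0
  map_one' := rfl
  map_mul' _ _ := rfl
  map_zero' := rfl
  map_add' _ _ := rfl

/-- Truncation from the right repetitive algebra onto the `m`-replicated algebra. -/
noncomputable def RightRep.trunc (m : ℕ) : RightRep k A →+* ReplAlg k A m where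
  toFun x := (fun d => x.1 d, fun s => x.2 s)
  map_one' := rfl
  map_mul' x y := by
    refine Prod.ext rfl (funext fun s => LinearMap.ext fun w => ?_)
    rfl
  map_zero' := rfl
  map_add' _ _ := rfl


section Aux

section DualR
variable (k R : Type) [Field k] [Ring R] [Algebra k R]

def DualR : Type := R →ₗ[k] k
instance : AddCommGroup (DualR k R) := inferInstanceAs (AddCommGroup (R →ₗ[k] k))
instance : Module k (DualR k R) := inferInstanceAs (Module k (R →ₗ[k] k))

variable {k R} in
/-- view an element of `DualR` as a linear map -/
def DualR.lin (φ : DualR k R) : R →ₗ[k] k := φ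

instance : Module R (DualR k R) where
  smul a φ := DualR.lin φ ∘ₗ LinearMap.mulRight k a
  one_smul φ := by
    show DualR.lin φ ∘ₗ LinearMap.mulRight k (1:R) = φ
    ext r; simp [DualR.lin, LinearMap.mulRight_apply]; rfl
  mul_smul a b φ := by
    show DualR.lin φ ∘ₗ LinearMap.mulRight k (a*b)
      = (DualR.lin φ ∘ₗ LinearMap.mulRight k b) ∘ₗ LinearMap.mulRight k a
    ext r; simp [DualR.lin, LinearMap.mulRight_apply, mul_assoc]; rfl
  smul_zero a := by
    show DualR.lin 0 ∘ₗ LinearMap.mulRight k a = 0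
    ext r; simp [DualR.lin]; rfl
  smul_add a φ ψ := by
    show (DualR.lin φ + DualR.lin ψ) ∘ₗ LinearMap.mulRight k a = _
    ext r; rfl
  add_smul a b φ := by
    show DualR.lin φ ∘ₗ LinearMap.mulRight k (a+b) = _
    ext r
    show (DualR.lin φ) (r * (a+b)) = (DualR.lin φ) (r*a) + (DualR.lin φ) (r*b)
    rw [mul_add, map_add]
  zero_smul φ := by
    show DualR.lin φ ∘ₗ LinearMap.mulRight k (0:R) = 0
    ext r
    show (DualR.lin φ) (r * 0) = 0
    rw [mul_zero, map_zero]

variable {k R}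

lemma DualR.smul_lin (a : R) (φ : DualR k R) (r : R) :
    (DualR.lin (a • φ)) r = DualR.lin φ (r * a) := rfl

lemma DualR.ext {φ ψ : DualR k R} (h : ∀ r, DualR.lin φ r = DualR.lin ψ r) : φ = ψ :=
  LinearMap.ext h

variable (k R)

instance : IsScalarTower k R (DualR k R) where
  smul_assoc c a φ := by
    refine DualR.ext fun r => ?_
    show DualR.lin φ (r * (c • a)) = DualR.lin (c • (a • φ)) r
    have h2 : DualR.lin (c • (a • φ)) r = c • DualR.lin (a • φ) r := rfl
    rw [h2, DualR.smul_lin, mul_smul_comm, map_smul]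

instance [FiniteDimensional k R] : Module.Finite k (DualR k R) :=
  inferInstanceAs (Module.Finite k (Module.Dual k R))

instance [FiniteDimensional k R] : Module.Finite R (DualR k R) :=
  Module.Finite.of_restrictScalars_finite k R (DualR k R)

theorem DualR.injective : Module.Injective R (DualR k R) where
  out X Y _ _ _ _ i hi g := by
    letI : Module k X := Module.compHom X (algebraMap k R)
    letI : Module k Y := Module.compHom Y (algebraMap k R)
    let i' : X →ₗ[k] Y :=
      { toFun := i
        map_add' := i.map_add
        map_smul' := fun c x => i.map_smul (algebraMap k R c) x }
    have hker : LinearMap.ker i' = ⊥ := by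
      rw [LinearMap.ker_eq_bot]; exact hi
    obtain ⟨l, hl⟩ := i'.exists_leftInverse_of_injective hker
    let f1 : X →ₗ[k] k :=
      { toFun := fun u => DualR.lin (g u) 1
        map_add' := fun u v => by show DualR.lin (g (u+v)) 1 = _; rw [map_add]; rfl
        map_smul' := fun c u => by
          show DualR.lin (g ((algebraMap k R c) • u)) 1 = c • DualR.lin (g u) 1
          rw [map_smul, DualR.smul_lin, one_mul, Algebra.algebraMap_eq_smul_one, map_smul] }
    let g1 : Y →ₗ[k] k := f1 ∘ₗ l
    have key : ∀ (c : k) (r : R) (y : Y), ((c • r) • y : Y) = (algebraMap k R c) • (r • y) := by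
      intro c r y
      rw [Algebra.smul_def, mul_smul]
    let h : Y →ₗ[R] DualR k R :=
      { toFun := fun y =>
          ({ toFun := fun r => g1 (r • y)
             map_add' := fun r s => by show g1 ((r+s) • y) = g1 (r • y) + g1 (s • y); rw [add_smul, map_add]
             map_smul' := fun c r => by
               show g1 ((c • r) • y) = c • g1 (r • y)
               rw [key]
               exact g1.map_smul c (r • y) } : R →ₗ[k] k)
        map_add' := fun y z => by
          refine DualR.ext fun r => ?_
          show g1 (r • (y + z)) = g1 (r • y) + g1 (r • z)
          rw [smul_add, map_add]
        map_smul' := fun a y => by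
          refine DualR.ext fun r => ?_
          show g1 (r • (a • y)) = DualR.lin (a • _) r
          show g1 (r • a • y) = g1 ((r * a) • y)
          rw [mul_smul] }
    refine ⟨h, fun x => ?_⟩
    refine DualR.ext fun r => ?_
    show g1 (r • i x) = DualR.lin (g x) r
    have h1 : (r • i x : Y) = i' (r • x) := (i.map_smul r x).symm
    rw [h1]
    show f1 (l (i' (r • x))) = DualR.lin (g x) r
    have h2 : l (i' (r • x)) = r • x := by
      have := LinearMap.congr_fun hl (r • x)
      simpa using this
    rw [h2]
    show DualR.lin (g (r • x)) 1 = DualR.lin (g x) r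
    rw [map_smul, DualR.smul_lin, one_mul]

end DualR


section B
variable {k R : Type} [Field k] [Ring R] [Algebra k R]

-- test compHom smul defeq
example (X : Type) [AddCommGroup X] [Module R X] (c : k) (x : X) : True := by
  letI : Module k X := Module.compHom X (algebraMap k R)
  have : c • x = (algebraMap k R c) • x := rfl
  trivial

theorem injective_pi {ι : Type} (Mf : ι → Type) [∀ i, AddCommGroup (Mf i)]
    [∀ i, Module R (Mf i)] (h : ∀ i, Module.Injective R (Mf i)) :
    Module.Injective R (∀ i, Mf i) where
  out X Y _ _ _ _ i hi g := by
    have H : ∀ j : ι, ∃ hj : Y →ₗ[R] Mf j, ∀ x, hj (i x) = (LinearMap.proj j).comp g x :=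
      fun j => (h j).out i hi ((LinearMap.proj j).comp g)
    choose hj hhj using H
    exact ⟨LinearMap.pi hj, fun x => funext fun j => hhj j x⟩

theorem fdNoetherian [FiniteDimensional k R] : IsNoetherianRing R :=
  isNoetherian_of_tower k (inferInstance : IsNoetherian k R)
end B


section Extract
variable {k R : Type} [Field k] [Ring R] [Algebra k R]

/-- `C` is an essential extension of `N` (inside `P`). -/
def EssOver {P : Type} [AddCommGroup P] [Module R P] (N C : Submodule R P) : Prop :=
  N ≤ C ∧ ∀ x ∈ C, x ≠ (0:P) → ∃ r : R, r • x ∈ N ∧ r • x ≠ 0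

theorem essover_summand (P : Type) [AddCommGroup P] [Module R P]
    (hP : Module.Injective R P) (y : P) :
    ∃ C : Submodule R P, EssOver (Submodule.span R {y}) C ∧ y ∈ C ∧
      ∃ ρ : P →ₗ[R] ↥C, ∀ c : ↥C, ρ (c : P) = c := by
  classical
  set N := Submodule.span R {y} with hN
  have hyN : y ∈ N := Submodule.mem_span_singleton_self y
  -- Zorn for a maximal essential extension C₀ of N
  set S : Set (Submodule R P) := {C | EssOver N C} with hS
  have hNS : N ∈ S := ⟨le_rfl, fun x hx hne => ⟨1, by simpa using hx, by simpa using hne⟩⟩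
  obtain ⟨C₀, -, hC₀max⟩ := zorn_le_nonempty₀ S (fun c hcS hchain y' hy' => by
    refine ⟨sSup c, ⟨?_, ?_⟩, fun z hz => le_sSup hz⟩
    · exact le_trans (hcS hy').1 (le_sSup hy')
    · intro x hx hxne
      rw [Submodule.mem_sSup_of_directed ⟨y', hy'⟩ hchain.directedOn] at hx
      obtain ⟨D, hDc, hxD⟩ := hx
      exact (hcS hDc).2 x hxD hxne) N hNS
  have hC₀ : EssOver N C₀ := hC₀max.1
  -- Zorn for a complement Z
  obtain ⟨Z, -, hZmax⟩ := zorn_le_nonempty₀ {Z : Submodule R P | Z ⊓ C₀ = ⊥}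
    (fun c hcS hchain y' hy' => by
      refine ⟨sSup c, ?_, fun z hz => le_sSup hz⟩
      show sSup c ⊓ C₀ = ⊥
      rw [eq_bot_iff]
      intro x hx
      obtain ⟨hx1, hx2⟩ := Submodule.mem_inf.mp hx
      rw [Submodule.mem_sSup_of_directed ⟨y', hy'⟩ hchain.directedOn] at hx1
      obtain ⟨D, hDc, hxD⟩ := hx1
      have : x ∈ D ⊓ C₀ := ⟨hxD, hx2⟩
      rw [hcS hDc] at this
      exact this) ⊥ (by simp)
  have hZ : Z ⊓ C₀ = ⊥ := hZmax.1
  set mkQ := Z.mkQ with hmkQ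
  set μ : ↥C₀ →ₗ[R] (P ⧸ Z) := mkQ ∘ₗ C₀.subtype with hμ
  have hmem_bot : ∀ x : P, x ∈ Z → x ∈ C₀ → x = 0 := by
    intro x h1 h2
    have : x ∈ Z ⊓ C₀ := ⟨h1, h2⟩
    rw [hZ] at this
    simpa using this
  have hμinj : Function.Injective μ := by
    intro a b hab
    have : μ (a - b) = 0 := by rw [map_sub, hab, sub_self]
    have h1 : ((a - b : ↥C₀) : P) ∈ Z := by
      rwa [hμ, LinearMap.comp_apply, Submodule.subtype_apply, hmkQ,
        Submodule.mkQ_apply, Submodule.Quotient.mk_eq_zero] at this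
    have h0 : (a - b : ↥C₀) = 0 := Subtype.ext (by simpa using hmem_bot _ h1 (a - b).2)
    rwa [sub_eq_zero] at h0
  have step1 : ∀ q : P ⧸ Z, q ≠ 0 → ∃ (r : R) (c : ↥C₀), μ c = r • q ∧ r • q ≠ 0 := by
    intro q hq
    obtain ⟨x, rfl⟩ := Submodule.mkQ_surjective Z q
    have hxZ : x ∉ Z := by
      intro h
      exact hq (by rwa [Submodule.mkQ_apply, Submodule.Quotient.mk_eq_zero])
    set U := Z ⊔ Submodule.span R {x} with hU
    have hZU : Z ≤ U := le_sup_left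
    have hUne : U ≠ Z := by
      intro hUZ
      have hxU : x ∈ U := Submodule.mem_sup_right (Submodule.mem_span_singleton_self x)
      exact hxZ (hUZ ▸ hxU)
    have hUC : U ⊓ C₀ ≠ ⊥ := by
      intro h0
      exact hUne (le_antisymm (hZmax.2 h0 hZU) hZU)
    obtain ⟨u, hu, hune⟩ := Submodule.exists_mem_ne_zero_of_ne_bot hUC
    obtain ⟨z, hz, w, hw, rfl⟩ := Submodule.mem_sup.mp hu.1
    obtain ⟨r, rfl⟩ := Submodule.mem_span_singleton.mp hw
    refine ⟨r, ⟨z + r • x, hu.2⟩, ?_, ?_⟩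
    · show mkQ (z + r • x) = r • mkQ x
      rw [map_add, map_smul]
      have : mkQ z = 0 := by rwa [hmkQ, Submodule.mkQ_apply, Submodule.Quotient.mk_eq_zero]
      rw [this, zero_add]
    · show r • mkQ x ≠ 0
      rw [← map_smul]
      intro h0
      have hrx : r • x ∈ Z := by rwa [hmkQ, Submodule.mkQ_apply, Submodule.Quotient.mk_eq_zero] at h0
      have : z + r • x ∈ Z := Z.add_mem hz hrx
      exact hune (hmem_bot _ this hu.2)
  have step2 : ∀ q : P ⧸ Z, q ≠ 0 → ∃ (r : R) (n : P), n ∈ N ∧ n ≠ 0 ∧ mkQ n = r • q := by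
    intro q hq
    obtain ⟨r, c, hc, hne⟩ := step1 q hq
    have hcne : (c : P) ≠ 0 := by
      intro h0
      apply hne
      rw [← hc, hμ, LinearMap.comp_apply, Submodule.subtype_apply, h0, map_zero]
    obtain ⟨s, hsN, hsne⟩ := hC₀.2 (c : P) c.2 hcne
    refine ⟨s * r, s • (c : P), hsN, hsne, ?_⟩
    rw [map_smul, mul_smul, show mkQ (c : P) = μ c from rfl, hc]
  obtain ⟨φ, hφ⟩ := hP.out μ hμinj C₀.subtype
  have hφinj : Function.Injective φ := by
    intro a b hab
    rw [← sub_eq_zero]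
    by_contra hne
    obtain ⟨r, c, hc, hrne⟩ := step1 (a - b) hne
    have h1 : φ (r • (a - b)) = 0 := by
      rw [map_smul, map_sub, hab, sub_self, smul_zero]
    have h2 : (c : P) = 0 := by
      have h3 := hφ c
      rw [hc, h1] at h3
      exact h3.symm
    apply hrne
    rw [← hc, hμ, LinearMap.comp_apply, Submodule.subtype_apply, h2, map_zero]
  have hC₀range : C₀ ≤ LinearMap.range φ := fun x hx => ⟨μ ⟨x, hx⟩, hφ _⟩
  have hrangeS : EssOver N (LinearMap.range φ) := by
    refine ⟨le_trans hC₀.1 hC₀range, ?_⟩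
    rintro x ⟨q, rfl⟩ hxne
    have hq : q ≠ 0 := by rintro rfl; simp at hxne
    obtain ⟨r, n, hnN, hnne, hmk⟩ := step2 q hq
    have h1 : φ (r • q) = n := by
      rw [← hmk]
      have h2 : mkQ n = μ ⟨n, hC₀.1 hnN⟩ := rfl
      rw [h2, hφ]
      rfl
    refine ⟨r, ?_, ?_⟩
    · rw [← map_smul, h1]; exact hnN
    · rw [← map_smul, h1]; exact hnne
  have hreq : LinearMap.range φ = C₀ := le_antisymm (hC₀max.2 hrangeS hC₀range) hC₀range
  have hμsurj : Function.Surjective μ := by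
    intro q
    have hin : φ q ∈ C₀ := hreq ▸ ⟨q, rfl⟩
    refine ⟨⟨φ q, hin⟩, hφinj ?_⟩
    rw [hφ ⟨φ q, hin⟩]
    rfl
  have hsup : C₀ ⊔ Z = ⊤ := by
    rw [eq_top_iff]
    intro x _
    obtain ⟨c, hc⟩ := hμsurj (mkQ x)
    have hxz : x - (c : P) ∈ Z := by
      rw [← Submodule.Quotient.mk_eq_zero, ← Submodule.mkQ_apply, ← hmkQ, map_sub]
      have : mkQ (c : P) = μ c := rfl
      rw [this, hc, sub_self]
    have hxx : x = (c : P) + (x - (c : P)) := by abel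
    rw [hxx]
    exact Submodule.add_mem_sup c.2 hxz
  have hcompl : IsCompl C₀ Z := ⟨disjoint_iff.mpr (by rw [inf_comm]; exact hZ),
    codisjoint_iff.mpr hsup⟩
  exact ⟨C₀, hC₀, hC₀.1 hyN, Submodule.linearProjOfIsCompl C₀ Z hcompl,
    fun c => Submodule.linearProjOfIsCompl_apply_left hcompl c⟩

end Extract

section Fin1

theorem finite_of_essover (k : Type) {R : Type} [Field k] [Ring R] [Algebra k R]
    [FiniteDimensional k R] (P : Type) [AddCommGroup P] [Module R P] (y : P)
    (C : Submodule R P) (h : EssOver (Submodule.span R {y}) C) :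
    Module.Finite R ↥C := by
  classical
  set N := Submodule.span R {y} with hN
  letI : Module k ↥N := Module.compHom _ (algebraMap k R)
  have hyN : y ∈ N := Submodule.mem_span_singleton_self y
  let πk : R →ₗ[k] ↥N :=
    { toFun := fun r => ⟨r • y, Submodule.smul_mem _ r hyN⟩
      map_add' := fun r s => Subtype.ext (by simp [add_smul])
      map_smul' := fun c r => Subtype.ext (by
        show (c • r) • y = ((algebraMap k R c • (⟨r • y, _⟩ : ↥N) : ↥N) : P)
        rw [Submodule.coe_smul, Algebra.smul_def, mul_smul])
    }
  have hπsurj : Function.Surjective πk := by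
    rintro ⟨x, hx⟩
    obtain ⟨a, ha⟩ := Submodule.mem_span_singleton.mp hx
    exact ⟨a, Subtype.ext ha⟩
  haveI : Module.Finite k ↥N := Module.Finite.of_surjective πk hπsurj
  set t := Module.finrank k ↥N with ht
  let b : Module.Basis (Fin t) k ↥N := Module.finBasis k ↥N
  -- the embedding θ of N into (DualR)^t
  let θ : ↥N →ₗ[R] (Fin t → DualR k R) :=
    { toFun := fun x => fun i =>
        (({ toFun := fun r => b.coord i (r • x)
            map_add' := fun r s => by
              show b.coord i ((r + s) • x) = b.coord i (r • x) + b.coord i (s • x)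
              rw [add_smul, map_add]
            map_smul' := fun c r => by
              show b.coord i ((c • r) • x) = c • b.coord i (r • x)
              rw [Algebra.smul_def, mul_smul]
              exact (b.coord i).map_smul c (r • x) } : R →ₗ[k] k) : DualR k R)
      map_add' := fun x z => funext fun i => DualR.ext fun r => by
        show b.coord i (r • (x + z)) = b.coord i (r • x) + b.coord i (r • z)
        rw [smul_add, map_add]
      map_smul' := fun a x => funext fun i => DualR.ext fun r => by
        show b.coord i (r • (a • x)) = DualR.lin (a • _) r
        show b.coord i (r • a • x) = b.coord i ((r * a) • x)
        rw [mul_smul] }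
  have hθ0 : ∀ x : ↥N, θ x = 0 → x = 0 := by
    intro x hx
    have hco : ∀ i, b.coord i x = 0 := by
      intro i
      have h1 : DualR.lin (θ x i) 1 = DualR.lin (0 : DualR k R) 1 := by
        rw [show θ x i = (0 : DualR k R) from congrFun hx i]
      have h2 : DualR.lin (θ x i) 1 = b.coord i ((1:R) • x) := rfl
      rw [h2, one_smul] at h1
      exact h1
    have := b.forall_coord_eq_zero_iff.mp hco
    exact this
  have hθinj : Function.Injective θ := by
    intro a b hab
    have : θ (a - b) = 0 := by rw [map_sub, hab, sub_self]
    have := hθ0 _ this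
    rwa [sub_eq_zero] at this
  -- extend along N ≤ C
  have hinc : Function.Injective (Submodule.inclusion h.1) := Submodule.inclusion_injective h.1
  obtain ⟨Θ, hΘ⟩ := (injective_pi (fun _ : Fin t => DualR k R)
    (fun _ => DualR.injective k R)).out (Submodule.inclusion h.1) hinc θ
  have hΘ0 : ∀ c : ↥C, Θ c = 0 → c = 0 := by
    intro c hc
    by_contra hcne
    have hcP : (c : P) ≠ 0 := fun h0 => hcne (Subtype.ext h0)
    obtain ⟨r, hrN, hrne⟩ := h.2 (c : P) c.2 hcP
    have hrc : Submodule.inclusion h.1 ⟨r • (c : P), hrN⟩ = r • c := Subtype.ext rfl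
    have : θ ⟨r • (c : P), hrN⟩ = 0 := by
      rw [← hΘ, hrc, map_smul, hc, smul_zero]
    have := hθ0 _ this
    exact hrne (by simpa using congrArg Subtype.val this)
  have hΘinj : Function.Injective Θ := by
    intro a b hab
    have : Θ (a - b) = 0 := by rw [map_sub, hab, sub_self]
    have := hΘ0 _ this
    rwa [sub_eq_zero] at this
  haveI : IsNoetherianRing R := fdNoetherian (k := k)
  haveI : IsNoetherian R (Fin t → DualR k R) :=
    isNoetherian_of_isNoetherianRing_of_finite R _
  haveI : Module.Finite R ↥(LinearMap.range Θ) :=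
    Module.Finite.iff_fg.mpr (IsNoetherian.noetherian _)
  exact Module.Finite.equiv (LinearEquiv.ofInjective Θ hΘinj).symm
end Fin1

section Cat
open CategoryTheory

theorem projective_of_retract {R : Type} [Ring R] {C D : ModuleCat R} (i : C ⟶ D) (r : D ⟶ C)
    (h : i ≫ r = 𝟙 C) (hD : Projective D) : Projective C := by
  constructor
  intro E X f e he
  obtain ⟨f', hf'⟩ := hD.factors (r ≫ f) e
  exact ⟨i ≫ f', by rw [Category.assoc, hf', ← Category.assoc, h, Category.id_comp]⟩

theorem injective_of_retract {R : Type} [Ring R] {C D : ModuleCat R} (i : C ⟶ D) (r : D ⟶ C)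
    (h : i ≫ r = 𝟙 C) (hD : Injective D) : Injective C := by
  constructor
  intro X Y g f hf
  obtain ⟨h', hh'⟩ := hD.factors (g ≫ i) f
  exact ⟨h' ≫ r, by rw [← Category.assoc, hh', Category.assoc, h, Category.comp_id]⟩

theorem inAdd_of_retract {R : Type} [Ring R] (M : ModuleCat R) {C D : ModuleCat R}
    (i : C ⟶ D) (r : D ⟶ C) (h : i ≫ r = 𝟙 C) (hD : InAdd R M D) : InAdd R M C := by
  obtain ⟨n, s, t, hst⟩ := hD
  refine ⟨n, i ≫ s, t ≫ r, ?_⟩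
  rw [Category.assoc, ← Category.assoc s t r, hst, Category.id_comp, h]

theorem inAdd_zero {R : Type} [Ring R] (M : ModuleCat R) (C : ModuleCat R)
    (hC : Subsingleton C) : InAdd R M C := by
  refine ⟨0, 0, 0, ?_⟩
  apply ModuleCat.hom_ext; apply LinearMap.ext
  intro x
  exact Subsingleton.elim _ _

theorem inAdd_combine {R : Type} [Ring R] (M : ModuleCat R) {C C₁ C₂ : ModuleCat R}
    (i₁ : C₁ ⟶ C) (ρ₁ : C ⟶ C₁) (i₂ : C₂ ⟶ C) (ρ₂ : C ⟶ C₂)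
    (hdec : ∀ c : C, i₁ (ρ₁ c) + i₂ (ρ₂ c) = c)
    (h1 : InAdd R M C₁) (h2 : InAdd R M C₂) : InAdd R M C := by
  obtain ⟨n₁, s₁, t₁, hst₁⟩ := h1
  obtain ⟨n₂, s₂, t₂, hst₂⟩ := h2
  let s : C ⟶ ModuleCat.of R (Fin (n₁ + n₂) → M) :=
    ModuleCat.ofHom <| LinearMap.pi (fun j => Fin.addCases
      (fun j1 => (LinearMap.proj j1) ∘ₗ ((ρ₁ ≫ s₁).hom : C →ₗ[R] (Fin n₁ → M)))
      (fun j2 => (LinearMap.proj j2) ∘ₗ ((ρ₂ ≫ s₂).hom : C →ₗ[R] (Fin n₂ → M))) j)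
  let t : ModuleCat.of R (Fin (n₁ + n₂) → M) ⟶ C :=
    ModuleCat.ofHom <| ((t₁ ≫ i₁ : ModuleCat.of R (Fin n₁ → M) ⟶ C).hom ∘ₗ LinearMap.funLeft R M (Fin.castAdd n₂))
      + ((t₂ ≫ i₂ : ModuleCat.of R (Fin n₂ → M) ⟶ C).hom ∘ₗ LinearMap.funLeft R M (Fin.natAdd n₁))
  refine ⟨n₁ + n₂, s, t, ?_⟩
  apply ModuleCat.hom_ext; apply LinearMap.ext
  intro c
  show t (s c) = c
  have e1 : (fun j1 => s c (Fin.castAdd n₂ j1)) = s₁ (ρ₁ c) := by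
    funext j1
    show (Fin.addCases
      (fun j1 => (LinearMap.proj j1) ∘ₗ ((ρ₁ ≫ s₁).hom : C →ₗ[R] (Fin n₁ → M)))
      (fun j2 => (LinearMap.proj j2) ∘ₗ ((ρ₂ ≫ s₂).hom : C →ₗ[R] (Fin n₂ → M)))
      (Fin.castAdd n₂ j1) : ↑C →ₗ[R] ↑M) c = s₁ (ρ₁ c) j1
    rw [Fin.addCases_left]
    rfl
  have e2 : (fun j2 => s c (Fin.natAdd n₁ j2)) = s₂ (ρ₂ c) := by
    funext j2
    show (Fin.addCases
      (fun j1 => (LinearMap.proj j1) ∘ₗ ((ρ₁ ≫ s₁).hom : C →ₗ[R] (Fin n₁ → M)))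
      (fun j2 => (LinearMap.proj j2) ∘ₗ ((ρ₂ ≫ s₂).hom : C →ₗ[R] (Fin n₂ → M)))
      (Fin.natAdd n₁ j2) : ↑C →ₗ[R] ↑M) c = s₂ (ρ₂ c) j2
    rw [Fin.addCases_right]
    rfl
  show (t₁ ≫ i₁) (LinearMap.funLeft R ↑M (Fin.castAdd n₂) (s c))
      + (t₂ ≫ i₂) (LinearMap.funLeft R ↑M (Fin.natAdd n₁) (s c)) = c
  have hf1 : LinearMap.funLeft R ↑M (Fin.castAdd n₂) (s c) = s₁ (ρ₁ c) := e1
  have hf2 : LinearMap.funLeft R ↑M (Fin.natAdd n₁) (s c) = s₂ (ρ₂ c) := e2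
  rw [hf1, hf2]
  have g1 : (t₁ ≫ i₁) (s₁ (ρ₁ c)) = i₁ (ρ₁ c) := by
    show i₁ (t₁ (s₁ (ρ₁ c))) = i₁ (ρ₁ c)
    congr 1
    exact congrArg (fun (φ : C₁ ⟶ C₁) => φ (ρ₁ c)) hst₁
  have g2 : (t₂ ≫ i₂) (s₂ (ρ₂ c)) = i₂ (ρ₂ c) := by
    show i₂ (t₂ (s₂ (ρ₂ c))) = i₂ (ρ₂ c)
    congr 1
    exact congrArg (fun (φ : C₂ ⟶ C₂) => φ (ρ₂ c)) hst₂
  rw [g1, g2]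
  exact hdec c

end Cat

section KD
open CategoryTheory

/-- finrank over `k` of an `R`-module, via restriction of scalars. -/
noncomputable def kd (k : Type) {R : Type} [Field k] [Ring R] [Algebra k R]
    (C : ModuleCat R) : ℕ :=
  @Module.finrank k ↑C _ _ (Module.compHom ↑C (algebraMap k R))

theorem kd_lt (k : Type) {R : Type} [Field k] [Ring R] [Algebra k R] [FiniteDimensional k R]
    (C : ModuleCat R) (hfin : Module.Finite R ↑C) (p : Submodule R ↑C) (hp : p ≠ ⊤) :
    kd k (ModuleCat.of R ↥p) < kd k C := by
  letI mk : Module k ↑C := Module.compHom ↑C (algebraMap k R)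
  letI : IsScalarTower k R ↑C := ⟨fun c r m => by
    show ((c • r) • m : ↑C) = (algebraMap k R c) • (r • m)
    rw [Algebra.smul_def, mul_smul]⟩
  haveI : Module.Finite k ↑C := Module.Finite.trans R ↑C
  let p' : Submodule k ↑C := p.restrictScalars k
  have hp' : p' ≠ ⊤ := by
    intro h
    apply hp
    rw [eq_top_iff]
    intro x _
    have : x ∈ p' := h ▸ Submodule.mem_top
    exact this
  have hlt : Module.finrank k ↥p' < Module.finrank k ↑C :=
    Submodule.finrank_lt hp'
  letI mp : Module k ↥p := Module.compHom ↥p (algebraMap k R)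
  have heq : Module.finrank k ↥p' = Module.finrank k ↥p := by
    refine LinearEquiv.finrank_eq ?_
    exact
      { toFun := fun x => (⟨x.1, x.2⟩ : ↥p)
        invFun := fun x => ⟨x.1, x.2⟩
        map_add' := fun x y => rfl
        map_smul' := fun c x => rfl
        left_inv := fun x => rfl
        right_inv := fun x => rfl }
  show Module.finrank k ↥p < Module.finrank k ↑C
  rw [← heq]
  exact hlt

theorem inAdd_of_fin_projinj (k : Type) {R : Type} [Field k] [Ring R] [Algebra k R]
    [FiniteDimensional k R] (M : ModuleCat R)
    (hM : ∀ N : ModuleCat R, Indec N → Module.Finite R N → Projective N → Injective N →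
      InAdd R M N) :
    ∀ (C : ModuleCat R), Module.Finite R C → Projective C → Injective C → InAdd R M C := by
  classical
  suffices H : ∀ (n : ℕ) (C : ModuleCat R), kd k C ≤ n → Module.Finite R C → Projective C →
      Injective C → InAdd R M C by
    exact fun C h1 h2 h3 => H (kd k C) C le_rfl h1 h2 h3
  intro n
  induction n with
  | zero =>
    intro C hkd hfin hproj hinj
    refine inAdd_zero M C ?_
    letI mk : Module k ↑C := Module.compHom ↑C (algebraMap k R)
    letI : IsScalarTower k R ↑C := ⟨fun c r m => by
      show ((c • r) • m : ↑C) = (algebraMap k R c) • (r • m)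
      rw [Algebra.smul_def, mul_smul]⟩
    haveI : Module.Finite k ↑C := Module.Finite.trans R ↑C
    have h0 : Module.finrank k ↑C = 0 := Nat.le_zero.mp hkd
    exact Module.finrank_zero_iff.mp h0
  | succ n ih =>
    intro C hkd hfin hproj hinj
    by_cases hsub : Subsingleton ↑C
    · exact inAdd_zero M C hsub
    have hnt : Nontrivial ↑C := not_subsingleton_iff_nontrivial.mp hsub
    by_cases hind : ∀ f : C ⟶ C, f ≫ f = f → f = 0 ∨ f = 𝟙 C
    · exact hM C ⟨hnt, hind⟩ hfin hproj hinj
    push_neg at hind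
    obtain ⟨e, he, he0, he1⟩ := hind
    have hee : ∀ x : ↑C, e (e x) = e x := fun x =>
      congrArg (fun (φ : C ⟶ C) => φ x) he
    haveI : IsNoetherianRing R := fdNoetherian (k := k)
    haveI : IsNoetherian R ↑C := isNoetherian_of_isNoetherianRing_of_finite R ↑C
    set C₁ : Submodule R ↑C := LinearMap.range e.hom with hC₁
    set C₂ : Submodule R ↑C := LinearMap.ker e.hom with hC₂
    let obj₁ := ModuleCat.of R ↥C₁
    let obj₂ := ModuleCat.of R ↥C₂
    let i₁ : obj₁ ⟶ C := ModuleCat.ofHom C₁.subtype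
    let r₁ : C ⟶ obj₁ := ModuleCat.ofHom e.hom.rangeRestrict
    have hretr₁ : i₁ ≫ r₁ = 𝟙 obj₁ := by
      apply ModuleCat.hom_ext; apply LinearMap.ext
      rintro ⟨x, hx⟩
      obtain ⟨d, hd⟩ := hx
      apply Subtype.ext
      show e x = x
      rw [← hd, hee]
    let i₂ : obj₂ ⟶ C := ModuleCat.ofHom C₂.subtype
    let r₂ : C ⟶ obj₂ := ModuleCat.ofHom <| LinearMap.codRestrict C₂ (LinearMap.id - e.hom)
      (fun c => by
        show e (c - e c) = 0
        rw [map_sub, hee, sub_self])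
    have hretr₂ : i₂ ≫ r₂ = 𝟙 obj₂ := by
      apply ModuleCat.hom_ext; apply LinearMap.ext
      rintro ⟨x, hx⟩
      apply Subtype.ext
      show x - e x = x
      rw [show e x = 0 from hx, sub_zero]
    have hne₁ : C₁ ≠ ⊤ := by
      intro htop
      apply he1
      apply ModuleCat.hom_ext; apply LinearMap.ext
      intro x
      have hx : x ∈ C₁ := htop ▸ Submodule.mem_top
      obtain ⟨d, hd⟩ := hx
      show e x = x
      rw [← hd, hee]
    have hne₂ : C₂ ≠ ⊤ := by
      intro htop
      apply he0
      apply ModuleCat.hom_ext; apply LinearMap.ext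
      intro x
      have hx : x ∈ C₂ := htop ▸ Submodule.mem_top
      exact hx
    haveI hfin₁ : Module.Finite R ↥C₁ := Module.Finite.iff_fg.mpr (IsNoetherian.noetherian C₁)
    haveI hfin₂ : Module.Finite R ↥C₂ := Module.Finite.iff_fg.mpr (IsNoetherian.noetherian C₂)
    have hkd₁ : kd k obj₁ ≤ n := Nat.lt_succ_iff.mp (lt_of_lt_of_le (kd_lt k C hfin C₁ hne₁) hkd)
    have hkd₂ : kd k obj₂ ≤ n := Nat.lt_succ_iff.mp (lt_of_lt_of_le (kd_lt k C hfin C₂ hne₂) hkd)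
    have hin₁ : InAdd R M obj₁ := ih obj₁ hkd₁ hfin₁
      (projective_of_retract i₁ r₁ hretr₁ hproj) (injective_of_retract i₁ r₁ hretr₁ hinj)
    have hin₂ : InAdd R M obj₂ := ih obj₂ hkd₂ hfin₂
      (projective_of_retract i₂ r₂ hretr₂ hproj) (injective_of_retract i₂ r₂ hretr₂ hinj)
    refine inAdd_combine M i₁ r₁ i₂ r₂ ?_ hin₁ hin₂
    intro c
    show e c + (c - e c) = c
    abel

end KD

end Aux

section ReplAlgInst
open CategoryTheory

variable {Dg Sb : Type} {cl rw : Sb → Dg}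

noncomputable instance instBDModK : Module k (BiDiag k A Dg Sb cl rw) :=
  (inferInstance : Module k ((Dg → A) × (Sb → Module.Dual k A)))

variable {k A}

theorem BiDiag.smul_mul (c : k) (x y : BiDiag k A Dg Sb cl rw) :
    (c • x) * y = c • (x * y) := by
  refine Prod.ext (funext fun d => ?_) (funext fun s => LinearMap.ext fun w => ?_)
  · show (c • x.1 d) * y.1 d = c • (x.1 d * y.1 d)
    rw [smul_mul_assoc]
  · show (c • x.2 s) (y.1 (cl s) * w) + y.2 s (w * (c • x.1 (rw s)))
      = c • (x.2 s (y.1 (cl s) * w) + y.2 s (w * x.1 (rw s)))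
    rw [LinearMap.smul_apply, mul_smul_comm, map_smul, smul_add]

theorem BiDiag.mul_smul' (c : k) (x y : BiDiag k A Dg Sb cl rw) :
    x * (c • y) = c • (x * y) := by
  refine Prod.ext (funext fun d => ?_) (funext fun s => LinearMap.ext fun w => ?_)
  · show x.1 d * (c • y.1 d) = c • (x.1 d * y.1 d)
    rw [mul_smul_comm]
  · show x.2 s ((c • y.1 (cl s)) * w) + (c • y.2 s) (w * x.1 (rw s))
      = c • (x.2 s (y.1 (cl s) * w) + y.2 s (w * x.1 (rw s)))
    rw [LinearMap.smul_apply, smul_mul_assoc, map_smul, smul_add]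

end ReplAlgInst

section ReplAlgInst2
open CategoryTheory

noncomputable instance instReplModK (m : ℕ) : Module k (ReplAlg k A m) :=
  inferInstanceAs (Module k (BiDiag k A (Fin (m+1)) (Fin m) Fin.castSucc Fin.succ))

noncomputable instance instReplAlgK (m : ℕ) : Algebra k (ReplAlg k A m) :=
  Algebra.ofModule
    (fun c x y => BiDiag.smul_mul c x y)
    (fun c x y => BiDiag.mul_smul' c x y)

theorem replAlg_finiteDimensional [FiniteDimensional k A] (m : ℕ) :
    FiniteDimensional k (ReplAlg k A m) :=
  inferInstanceAs (FiniteDimensional k ((Fin (m+1) → A) × (Fin m → Module.Dual k A)))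

end ReplAlgInst2


/-- If `M` contains all projective-injective indecomposable `A^(m)`-modules as direct summands
and `X` has a projective-injective projective cover, then every minimal right
`add M`-approximation of `X` is an epimorphism. -/
theorem minimal_approx_surjective_of_projInj_cover
    (k : Type) [Field k] (A : Type) [Ring A] [Algebra k A] [FiniteDimensional k A]
    (hhered : gldimLE A 1) (m : ℕ)
    (M : ModuleCat (ReplAlg k A m))
    (hM : ∀ N : ModuleCat (ReplAlg k A m), Indec N → Module.Finite (ReplAlg k A m) N →
      Projective N → Injective N → InAdd (ReplAlg k A m) M N)
    (X : ModuleCat (ReplAlg k A m))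
    (hX : ∃ (P : ModuleCat (ReplAlg k A m)) (p : P ⟶ X),
      IsProjCover (ReplAlg k A m) p ∧ Injective P)
    (M₁ : ModuleCat (ReplAlg k A m)) (g : M₁ ⟶ X)
    (hg : IsRightApprox (ReplAlg k A m) (fun N => InAdd (ReplAlg k A m) M N) g)
    (hmin : RightMinimal g) :
    Function.Surjective g := by
  classical
  obtain ⟨P, p, ⟨hPproj, hpsurj, hpcover⟩, hPinjective⟩ := hX
  haveI : FiniteDimensional k (ReplAlg k A m) := replAlg_finiteDimensional k A m
  have hPmodinj : Module.Injective (ReplAlg k A m) ↑P := by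
    rw [Module.injective_iff_injective_object]
    show CategoryTheory.Injective (ModuleCat.of (ReplAlg k A m) ↑P)
    rw [ModuleCat.of_coe]
    exact hPinjective
  intro x
  obtain ⟨y, rfl⟩ := hpsurj x
  obtain ⟨C₀, hess, hyC, ρ, hρ⟩ := essover_summand ↑P hPmodinj y
  haveI hCfin : Module.Finite (ReplAlg k A m) ↥C₀ := finite_of_essover k ↑P y C₀ hess
  let Cobj := ModuleCat.of (ReplAlg k A m) ↥C₀
  let ι : Cobj ⟶ P := ModuleCat.ofHom C₀.subtype
  let ρ' : P ⟶ Cobj := ModuleCat.ofHom ρ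
  have hretr : ι ≫ ρ' = 𝟙 Cobj := by
    apply ModuleCat.hom_ext; apply LinearMap.ext
    intro c
    exact hρ c
  have hCproj : Projective Cobj := projective_of_retract ι ρ' hretr hPproj
  have hCinj : Injective Cobj := injective_of_retract ι ρ' hretr hPinjective
  have hInAdd : InAdd (ReplAlg k A m) M Cobj :=
    inAdd_of_fin_projinj k M hM Cobj hCfin hCproj hCinj
  obtain ⟨h, hh⟩ := hg.2 Cobj hInAdd (ι ≫ p)
  refine ⟨h ⟨y, hyC⟩, ?_⟩
  exact congrArg (fun (φ : Cobj ⟶ X) => φ ⟨y, hyC⟩) hh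
end
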